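/- Every skew-symmetric matrix over F₂ (i.e., a matrix M with Mᵀ = M and all diagonal entries zero) has even rank. -/

import Mathlib

open Matrix Module Submodule LinearMap

/-- A nondegenerate alternating bilinear form exists only on an even-dimensional space. -/
theorem even_finrank_of_nondegenerate_alt (K : Type) [Field K] :
    ∀ (m : ℕ) (V : Type) (_ : AddCommGroup V) (_ : Module K V) (_ : FiniteDimensional K V)
      (B : LinearMap.BilinForm K V), B.IsAlt → B.Nondegenerate → finrank K V = m → Even m := by
  intro m
  induction m using Nat.strong_induction_on with
  | _ m ih =>
    intro V _ _ _ B halt hnd hdim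
    rcases Nat.eq_zero_or_pos m with hm | hm
    · simp [hm]
    have hrefl : B.IsRefl := halt.isRefl
    have : Nontrivial V := by
      apply Module.nontrivial_of_finrank_pos (R := K) (M := V); omega
    obtain ⟨x, hx⟩ := exists_ne (0 : V)
    have hxy : ∃ y, B x y ≠ 0 := by
      by_contra h
      push_neg at h
      exact hx (hnd.1 x h)
    obtain ⟨y₀, hy₀⟩ := hxy
    set y : V := (B x y₀)⁻¹ • y₀ with hy
    have hBxy : B x y = 1 := by
      simp [hy, inv_mul_cancel₀ hy₀]
    have hBxx : B x x = 0 := halt x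
    have hByy : B y y = 0 := halt y
    have hByx : B y x = -1 := by
      rw [← LinearMap.IsAlt.neg halt x y, hBxy]
    set W : Submodule K V := span K {x, y} with hW
    have hxW : x ∈ W := subset_span (by simp)
    have hyW : y ∈ W := subset_span (by simp)
    have hli : LinearIndependent K ![x, y] := by
      rw [LinearIndependent.pair_iff]
      intro s t hst
      have h1 : B (s • x + t • y) y = s := by
        simp [hBxy, hByy]
      have h2 : B (s • x + t • y) x = -t := by
        simp [hBxx, hByx]
      rw [hst] at h1 h2
      simp only [map_zero] at h1 h2
      constructor
      · exact h1.symm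
      · have : -t = 0 := h2.symm
        simpa using this
    have hWrank : finrank K W = 2 := by
      have : ({x, y} : Set V) = Set.range ![x, y] := by
        ext z; simp [Fin.exists_fin_two, or_comm]
      rw [hW, this, finrank_span_eq_card hli]
      simp
    have hWnd : (B.restrict W).Nondegenerate := by
      refine ((hrefl.domRestrict W).nondegenerate_iff_separatingLeft).mpr ?_
      rintro ⟨w, hw⟩ h
      obtain ⟨a, b, rfl⟩ := mem_span_pair.mp hw
      have h1 : B (a • x + b • y) y = 0 := h ⟨y, hyW⟩
      have h2 : B (a • x + b • y) x = 0 := h ⟨x, hxW⟩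
      simp only [map_add, _root_.map_smul, LinearMap.add_apply, LinearMap.smul_apply,
        smul_eq_mul, hBxx, hBxy, hByx, hByy, mul_zero, mul_one, mul_neg, add_zero,
        zero_add, neg_eq_zero] at h1 h2
      have ha : a = 0 := h1
      have hb : b = 0 := h2
      ext
      simp [ha, hb]
    have hcompl : IsCompl W (B.orthogonal W) :=
      B.isCompl_orthogonal_of_restrict_nondegenerate hrefl hWnd
    set W' : Submodule K V := B.orthogonal W with hW'
    have hW'rank : finrank K W' = m - 2 := by
      rw [hW', LinearMap.BilinForm.finrank_orthogonal hnd W, hWrank, hdim]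
    have hW'nd : (B.restrict W').Nondegenerate := by
      apply B.nondegenerate_restrict_of_disjoint_orthogonal hrefl
      rw [hW', LinearMap.BilinForm.orthogonal_orthogonal hnd hrefl]
      exact hcompl.disjoint.symm
    have hW'alt : (B.restrict W').IsAlt := fun w => halt w
    have hmle : 2 ≤ m := by
      rw [← hWrank, ← hdim]
      exact finrank_le W
    have heven := ih (m - 2) (by omega) W' inferInstance inferInstance inferInstance
      (B.restrict W') hW'alt hW'nd hW'rank
    obtain ⟨k, hk⟩ := heven
    exact ⟨k + 1, by omega⟩

/-- Every skew-symmetric (alternating) matrix over `𝔽₂`, i.e. a symmetric matrix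
with zero diagonal, has even rank. -/
theorem alternating_matrix_even_rank (n : ℕ) (M : Matrix (Fin n) (Fin n) (ZMod 2))
    (hsym : Mᵀ = M) (hdiag : ∀ i, M i i = 0) :
    Even M.rank := by
  set B : LinearMap.BilinForm (ZMod 2) (Fin n → ZMod 2) := Matrix.toBilin' M with hB
  have hBapp : ∀ v w, B v w = v ⬝ᵥ M *ᵥ w := fun v w => Matrix.toBilin'_apply' M v w
  have hMsym : ∀ i j, M i j = M j i := fun i j => by
    conv_lhs => rw [← hsym]
    rfl
  have hsymB : ∀ v w, B v w = B w v := by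
    intro v w
    rw [hBapp, hBapp, Matrix.dotProduct_mulVec, ← Matrix.mulVec_transpose, hsym,
      dotProduct_comm]
  have halt : B.IsAlt := by
    intro x
    rw [hBapp]
    have hexp : x ⬝ᵥ M *ᵥ x = ∑ p : Fin n × Fin n, x p.1 * (M p.1 p.2 * x p.2) := by
      rw [Fintype.sum_prod_type]
      simp [dotProduct, Matrix.mulVec, Finset.mul_sum]
    rw [hexp]
    apply Finset.sum_ninvolution (fun p => (p.2, p.1))
    · intro p
      have : M p.2 p.1 = M p.1 p.2 := hMsym p.2 p.1
      rw [this]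
      have h2 : (2 : ZMod 2) = 0 := rfl
      ring_nf
      rw [h2, mul_zero]
    · intro p hp hgp
      apply hp
      have h1 : p.2 = p.1 := congrArg Prod.fst hgp
      rw [h1, hdiag]
      ring
    · intro p; exact Finset.mem_univ _
    · intro p; rfl
  have hrefl : B.IsRefl := halt.isRefl
  set K0 : Submodule (ZMod 2) (Fin n → ZMod 2) := LinearMap.ker M.mulVecLin with hK0
  obtain ⟨W, hWc⟩ := Submodule.exists_isCompl K0
  have hfin : finrank (ZMod 2) (Fin n → ZMod 2) = n := by
    simp [finrank_pi]
  have hrankW : finrank (ZMod 2) W = M.rank := by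
    have h1 : finrank (ZMod 2) K0 + finrank (ZMod 2) W = n := by
      rw [Submodule.finrank_add_eq_of_isCompl hWc, hfin]
    have h2 : M.rank + finrank (ZMod 2) K0 = n := by
      rw [Matrix.rank, hK0, LinearMap.finrank_range_add_finrank_ker, hfin]
    omega
  have hker_zero : ∀ v, v ∈ K0 → ∀ w, B w v = 0 := by
    intro v hv w
    rw [hBapp]
    have : M *ᵥ v = 0 := hv
    rw [this, dotProduct_zero]
  have hWnd : (B.restrict W).Nondegenerate := by
    refine ((hrefl.domRestrict W).nondegenerate_iff_separatingLeft).mpr ?_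
    rintro ⟨w, hw⟩ h
    have hall : ∀ v, B w v = 0 := by
      intro v
      have hv : v ∈ K0 ⊔ W := by rw [hWc.sup_eq_top]; exact Submodule.mem_top
      obtain ⟨k, hk, w', hw', rfl⟩ := Submodule.mem_sup.mp hv
      have h1 : B w k = 0 := hker_zero k hk w
      have h2 : B w w' = 0 := h ⟨w', hw'⟩
      rw [map_add, h1, h2, add_zero]
    have hwK : w ∈ K0 := by
      show M *ᵥ w = 0
      funext i
      have := hall (Pi.single i 1)
      rw [hsymB, hBapp] at this
      simpa [dotProduct, Pi.single_apply] using this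
    have : w = 0 := by
      have := hWc.disjoint.symm
      exact (Submodule.disjoint_def.mp this) w hw hwK
    exact Subtype.ext this
  have hWalt : (B.restrict W).IsAlt := fun w => halt w
  have := even_finrank_of_nondegenerate_alt (ZMod 2) (M.rank) W inferInstance inferInstance
    inferInstance (B.restrict W) hWalt hWnd hrankW
  exact this
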